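/- Let S be a measurable space and μ a shift-invariant probability measure on S^{Z^d}. For each n ≥ 1 let ν_n := (2n)^{−d} Σ_{i∈Λ_n} (μ_{Λ_n})^per ∘ θ_i^{−1} be the averaged periodization of the Λ_n-marginal μ_{Λ_n}. Then ν_n converges locally to μ: for every finite Γ ⊂ Z^d and every bounded measurable function g on S^{Z^d} that depends only on the coordinates in Γ, lim_{n→∞} ∫ g dν_n = ∫ g dμ. -/

import Mathlib

open MeasureTheory Filter
open scoped ENNReal

/-- The lattice `ℤ^d`. -/
abbrev Zd (d : ℕ) := Fin d → ℤ

/-- The shift by vector `-i` on the configuration space `S^{ℤ^d}`: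
`(θ_i ω)_j = ω_{j+i}`. -/
def shift (S : Type*) {d : ℕ} (i : Zd d) (ω : Zd d → S) : Zd d → S :=
  fun j => ω (j + i)

/-- A measure on `S^{ℤ^d}` is shift-invariant if it is invariant under all shifts. -/
def ShiftInvariant {S : Type*} [MeasurableSpace S] {d : ℕ}
    (μ : Measure (Zd d → S)) : Prop :=
  ∀ i : Zd d, μ.map (shift S i) = μ

/-- The cube `Λ_n = {-n, …, n-1}^d` as a finite subset of `ℤ^d`. -/
noncomputable def cube (d n : ℕ) : Finset (Zd d) :=
  Finset.Icc (fun _ => -(n : ℤ)) (fun _ => (n : ℤ) - 1)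

/-- The decomposition of a configuration `ω ∈ S^{ℤ^d}` into its `2n`-blocks: the block
indexed by `k ∈ ℤ^d` is `(ω_{j + 2nk})_{j ∈ Λ_n}`. -/
def blockMap (S : Type*) (d n : ℕ) (ω : Zd d → S) : Zd d → (cube d n → S) :=
  fun k j => ω (fun l => (j : Zd d) l + (2 * (n : ℤ)) * k l)

/-- `Qper` is the periodization of a probability measure `Q` on `S^{Λ_n}`: the probability
measure on `S^{ℤ^d}` under which the disjoint blocks `((ω_{j+2nk})_{j∈Λ_n})_{k∈ℤ^d}` are
i.i.d. with law `Q`; it is characterized by the fact that every finite family of blocks is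
distributed according to the corresponding finite product of copies of `Q`. -/
def IsPeriodization {S : Type*} [MeasurableSpace S] {d n : ℕ}
    (Q : Measure (cube d n → S)) (Qper : Measure (Zd d → S)) : Prop :=
  IsProbabilityMeasure Qper ∧
    ∀ K : Finset (Zd d),
      Qper.map (fun ω (k : K) => blockMap S d n ω k)
        = Measure.pi (fun _ : K => Q)

/-- The marginal of `μ` on the coordinates in `Λ`. -/
noncomputable def marginal {S : Type*} [MeasurableSpace S] {d : ℕ}
    (μ : Measure (Zd d → S)) (Λ : Finset (Zd d)) : Measure (Λ → S) :=
  μ.map (fun ω (j : Λ) => ω j)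

section Aux

variable {S : Type*} [MeasurableSpace S] {d : ℕ}

lemma shift_measurable (i : Zd d) : Measurable (shift S i) :=
  measurable_pi_lambda _ fun _ => measurable_pi_apply _

lemma proj_measurable (n : ℕ) :
    Measurable (fun (ω : Zd d → S) (j : cube d n) => ω (j : Zd d)) :=
  measurable_pi_lambda _ fun _ => measurable_pi_apply _

/-- The block-`0` marginal of a periodization is `Q`, i.e. the projection of `Qper` onto
the coordinates of `Λ_n` is the original measure `Q`. -/
lemma periodization_proj {n : ℕ} {Q : Measure (cube d n → S)}
    {Qper : Measure (Zd d → S)} (h : IsPeriodization Q Qper) :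
    Qper.map (fun (ω : Zd d → S) (j : cube d n) => ω (j : Zd d)) = Q := by
  classical
  haveI : Unique (({0} : Finset (Zd d)) : Type _) :=
    { default := ⟨0, Finset.mem_singleton_self _⟩
      uniq := fun a => Subtype.ext (Finset.mem_singleton.mp a.2) }
  have h0 := h.2 {0}
  have hF : Measurable (fun (ω : Zd d → S) (k : ({0} : Finset (Zd d))) =>
      blockMap S d n ω k) :=
    measurable_pi_lambda _ fun _ => measurable_pi_lambda _ fun _ => measurable_pi_apply _
  have h1 : (Qper.map (fun (ω : Zd d → S) (k : ({0} : Finset (Zd d))) =>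
        blockMap S d n ω k)).map
        (MeasurableEquiv.piUnique (fun _ : ({0} : Finset (Zd d)) => (cube d n → S)))
      = Q := by
    rw [h0]
    exact (measurePreserving_piUnique (fun _ : ({0} : Finset (Zd d)) => Q)).map_eq
  rw [Measure.map_map (MeasurableEquiv.piUnique _).measurable hF] at h1
  have hfun : (⇑(MeasurableEquiv.piUnique (fun _ : ({0} : Finset (Zd d)) => (cube d n → S)))
      ∘ (fun (ω : Zd d → S) (k : ({0} : Finset (Zd d))) => blockMap S d n ω k))
      = fun (ω : Zd d → S) (j : cube d n) => ω (j : Zd d) := by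
    funext ω j
    show blockMap S d n ω ((default : ({0} : Finset (Zd d))) : Zd d) j = ω (j : Zd d)
    have : ((default : ({0} : Finset (Zd d))) : Zd d) = 0 :=
      Finset.mem_singleton.mp (default : ({0} : Finset (Zd d))).2
    rw [this]
    simp [blockMap]
  rw [hfun] at h1
  exact h1

end Aux

/-- The averaged periodizations
`ν_n = (2n)^{-d} Σ_{i ∈ Λ_n} (μ_{Λ_n})^per ∘ θ_i^{-1}` of the finite-volume marginals of a
shift-invariant probability measure `μ` converge locally to `μ`: for every bounded
measurable local function `g`, `∫ g dν_n → ∫ g dμ`. -/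
theorem averaged_periodization_marginals_local_tendsto
    {d : ℕ} (hd : 1 ≤ d) {S : Type*} [MeasurableSpace S]
    (μ : Measure (Zd d → S)) [IsProbabilityMeasure μ] (hinv : ShiftInvariant μ)
    (Qper : (n : ℕ) → Measure (Zd d → S))
    (hper : ∀ n : ℕ, 1 ≤ n → IsPeriodization (marginal μ (cube d n)) (Qper n)) :
    ∀ (Γ : Finset (Zd d)) (g : (Zd d → S) → ℝ),
      Measurable g → (∃ C : ℝ, ∀ ω, |g ω| ≤ C) →
      (∀ ω ω' : Zd d → S, (∀ j ∈ Γ, ω j = ω' j) → g ω = g ω') →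
      Tendsto
        (fun n : ℕ =>
          ∫ ω, g ω ∂(((2 * n : ℝ≥0∞) ^ d)⁻¹ • ∑ i ∈ cube d n, (Qper n).map (shift S i)))
        atTop (nhds (∫ ω, g ω ∂μ)) := by
  classical
  intro Γ g hg hbdd hloc
  obtain ⟨C, hC⟩ := hbdd
  -- the configuration space is nonempty
  have hne : Nonempty (Zd d → S) := by
    by_contra h
    rw [not_nonempty_iff] at h
    have h1 : μ Set.univ = 1 := measure_univ
    simp [Set.univ_eq_empty_iff.mpr h] at h1
  obtain ⟨ω₀⟩ := hne
  have hCnn : 0 ≤ C := le_trans (abs_nonneg _) (hC ω₀)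
  set I : ℝ := ∫ ω, g ω ∂μ with hI
  -- integrability and uniform bound on integrals wrt probability measures
  have hint : ∀ (ν : Measure (Zd d → S)), IsProbabilityMeasure ν → Integrable g ν := by
    intro ν hν
    exact (integrable_const C).mono' hg.aestronglyMeasurable
      (ae_of_all _ fun ω => by simpa [Real.norm_eq_abs] using hC ω)
  have hbound : ∀ (ν : Measure (Zd d → S)), IsProbabilityMeasure ν → |∫ ω, g ω ∂ν| ≤ C := by
    intro ν hν
    have := norm_integral_le_of_norm_le_const (μ := ν) (f := g) (C := C)
      (ae_of_all _ fun ω => by simpa [Real.norm_eq_abs] using hC ω)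
    simpa [Real.norm_eq_abs, measure_univ] using this
  -- the key identity for shifts staying inside the cube
  have hgood : ∀ n : ℕ, 1 ≤ n → ∀ i : Zd d, (∀ j ∈ Γ, j + i ∈ cube d n) →
      ∫ ω, g ω ∂((Qper n).map (shift S i)) = I := by
    intro n hn i hi
    haveI hprob := (hper n hn).1
    set ext : (cube d n → S) → (Zd d → S) :=
      fun η j => if h : j ∈ cube d n then η ⟨j, h⟩ else ω₀ j with hext
    have hextm : Measurable ext := by
      apply measurable_pi_lambda
      intro j
      by_cases h : j ∈ cube d n
      · simp only [hext, dif_pos h]; exact measurable_pi_apply _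
      · simp only [hext, dif_neg h]; exact measurable_const
    have key : ∀ ω : Zd d → S,
        g (shift S i ω) = g (shift S i (ext (fun j : cube d n => ω (j : Zd d)))) := by
      intro ω
      apply hloc
      intro j hj
      have hji := hi j hj
      simp only [shift, hext, dif_pos hji]
    calc ∫ ω, g ω ∂((Qper n).map (shift S i))
        = ∫ ω, g (shift S i ω) ∂(Qper n) :=
          integral_map (shift_measurable i).aemeasurable hg.aestronglyMeasurable
      _ = ∫ ω, g (shift S i (ext (fun j : cube d n => ω (j : Zd d)))) ∂(Qper n) :=
          integral_congr_ae (ae_of_all _ fun ω => key ω)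
      _ = ∫ η, g (shift S i (ext η))
            ∂((Qper n).map (fun (ω : Zd d → S) (j : cube d n) => ω (j : Zd d))) :=
          (integral_map (proj_measurable n).aemeasurable
            (hg.comp ((shift_measurable i).comp hextm)).aestronglyMeasurable).symm
      _ = ∫ η, g (shift S i (ext η)) ∂(marginal μ (cube d n)) := by
          rw [periodization_proj (hper n hn)]
      _ = ∫ ω, g (shift S i (ext (fun j : cube d n => ω (j : Zd d)))) ∂μ := by
          rw [marginal]
          exact integral_map (proj_measurable n).aemeasurable
            (hg.comp ((shift_measurable i).comp hextm)).aestronglyMeasurable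
      _ = ∫ ω, g (shift S i ω) ∂μ := integral_congr_ae (ae_of_all _ fun ω => (key ω).symm)
      _ = ∫ ω, g ω ∂(μ.map (shift S i)) :=
          (integral_map (shift_measurable i).aemeasurable hg.aestronglyMeasurable).symm
      _ = I := by rw [hinv i]
  -- choose M with Γ ⊆ cube d M
  obtain ⟨B, hBle⟩ : ∃ B : ℕ, ∀ j ∈ Γ, ∀ l : Fin d, (j l).natAbs ≤ B := by
    refine ⟨Γ.sup fun j => Finset.univ.sup fun l => (j l).natAbs, ?_⟩
    intro j hj l
    exact le_trans (Finset.le_sup (f := fun l => (j l).natAbs) (Finset.mem_univ l))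
      (Finset.le_sup (f := fun j => Finset.univ.sup fun l => (j l).natAbs) hj)
  obtain ⟨M, hM1, hΓM⟩ : ∃ M : ℕ, 1 ≤ M ∧ ∀ j ∈ Γ, ∀ l : Fin d,
      -(M:ℤ) ≤ j l ∧ j l ≤ (M:ℤ) - 1 := by
    refine ⟨B + 1, le_add_self, fun j hj l => ?_⟩
    have := hBle j hj l
    omega
  -- the inner cube of good shifts
  set inner : ℕ → Finset (Zd d) :=
    fun n => Finset.Icc (fun _ => (M:ℤ) - n) (fun _ => (n:ℤ) - M) with hinner
  have hsub : ∀ n : ℕ, M ≤ n → inner n ⊆ cube d n := by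
    intro n hn
    apply Finset.Icc_subset_Icc
    · intro l
      simp only
      omega
    · intro l
      simp only
      omega
  have hgoodmem : ∀ n : ℕ, ∀ i ∈ inner n, ∀ j ∈ Γ, j + i ∈ cube d n := by
    intro n i hi j hj
    rw [hinner, Finset.mem_Icc] at hi
    rw [cube, Finset.mem_Icc]
    constructor
    · intro l
      have := (hΓM j hj l).1
      have := hi.1 l
      simp only [Pi.add_apply] at *
      omega
    · intro l
      have := (hΓM j hj l).2
      have := hi.2 l
      simp only [Pi.add_apply] at *
      omega
  -- cardinalities
  have hcard_cube : ∀ n : ℕ, (cube d n).card = (2 * n) ^ d := by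
    intro n
    rw [cube, Pi.card_Icc]
    have : ∀ l : Fin d, (Finset.Icc (-(n:ℤ)) ((n:ℤ) - 1)).card = 2 * n := by
      intro l
      rw [Int.card_Icc]
      omega
    rw [Finset.prod_congr rfl fun l _ => this l]
    simp
  have hcard_inner : ∀ n : ℕ, M ≤ n → (inner n).card = (2 * (n - M) + 1) ^ d := by
    intro n hn
    rw [hinner, Pi.card_Icc]
    have : ∀ l : Fin d, (Finset.Icc ((M:ℤ) - n) ((n:ℤ) - M)).card = 2 * (n - M) + 1 := by
      intro l
      rw [Int.card_Icc]
      omega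
    rw [Finset.prod_congr rfl fun l _ => this l]
    simp
  -- the main estimate
  set F : ℕ → ℝ := fun n =>
    ∫ ω, g ω ∂(((2 * n : ℝ≥0∞) ^ d)⁻¹ • ∑ i ∈ cube d n, (Qper n).map (shift S i)) with hF
  have hprobmap : ∀ n : ℕ, 1 ≤ n → ∀ i : Zd d,
      IsProbabilityMeasure ((Qper n).map (shift S i)) := by
    intro n hn i
    haveI := (hper n hn).1
    exact Measure.isProbabilityMeasure_map (shift_measurable i).aemeasurable
  have hFval : ∀ n : ℕ, 1 ≤ n →
      F n = (((2 * n : ℕ) : ℝ) ^ d)⁻¹ *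
        ∑ i ∈ cube d n, ∫ ω, g ω ∂((Qper n).map (shift S i)) := by
    intro n hn
    simp only [hF]
    rw [integral_smul_measure, integral_finset_sum_measure
      (fun i _ => hint _ (hprobmap n hn i))]
    have h2 : ((2 * n : ℝ≥0∞) ^ d)⁻¹.toReal = (((2 * n : ℕ) : ℝ) ^ d)⁻¹ := by
      rw [ENNReal.toReal_inv, ENNReal.toReal_pow]
      push_cast
      norm_num
    rw [h2, smul_eq_mul]
  have hest : ∀ n : ℕ, max M 1 ≤ n →
      |F n - I| ≤ 2 * C * ((((2 * n) ^ d - (2 * (n - M) + 1) ^ d : ℕ) : ℝ) /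
        (((2 * n) ^ d : ℕ) : ℝ)) := by
    intro n hn
    have hnM : M ≤ n := le_trans (le_max_left _ _) hn
    have hn1 : 1 ≤ n := le_trans (le_max_right _ _) hn
    have hpos : (0:ℝ) < (((2 * n) ^ d : ℕ) : ℝ) := by
      have : 0 < (2 * n) ^ d := Nat.pow_pos (by omega)
      exact_mod_cast this
    have hFv := hFval n hn1
    -- rewrite I
    have h2npos : (0:ℝ) < ((2 * n : ℕ) : ℝ) := by
      exact_mod_cast (show 0 < 2 * n by omega)
    have hIcube : I = (((2 * n : ℕ) : ℝ) ^ d)⁻¹ * ∑ _i ∈ cube d n, I := by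
      rw [Finset.sum_const, hcard_cube, nsmul_eq_mul, ← mul_assoc]
      rw [show (((2 * n) ^ d : ℕ) : ℝ) = ((2 * n : ℕ) : ℝ) ^ d from by push_cast; ring]
      rw [inv_mul_cancel₀ (pow_ne_zero d (ne_of_gt h2npos)), one_mul]
    have hdiff : F n - I = (((2 * n : ℕ) : ℝ) ^ d)⁻¹ *
        ∑ i ∈ cube d n, (∫ ω, g ω ∂((Qper n).map (shift S i)) - I) := by
      rw [Finset.sum_sub_distrib, mul_sub, ← hFv, ← hIcube]
    -- the sum over good i vanishes
    have hsplit : ∑ i ∈ cube d n, (∫ ω, g ω ∂((Qper n).map (shift S i)) - I)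
        = ∑ i ∈ cube d n \ inner n, (∫ ω, g ω ∂((Qper n).map (shift S i)) - I) := by
      rw [← Finset.sum_sdiff (hsub n hnM)]
      have : ∑ i ∈ inner n, (∫ ω, g ω ∂((Qper n).map (shift S i)) - I) = 0 := by
        apply Finset.sum_eq_zero
        intro i hi
        rw [hgood n hn1 i (fun j hj => hgoodmem n i hi j hj), sub_self]
      rw [this, add_zero]
    have hterm : ∀ i : Zd d, |∫ ω, g ω ∂((Qper n).map (shift S i)) - I| ≤ 2 * C := by
      intro i
      calc |∫ ω, g ω ∂((Qper n).map (shift S i)) - I|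
          ≤ |∫ ω, g ω ∂((Qper n).map (shift S i))| + |I| := abs_sub _ _
        _ ≤ C + C := add_le_add (hbound _ (hprobmap n hn1 i)) (hbound μ inferInstance)
        _ = 2 * C := by ring
    have hsumbound : |∑ i ∈ cube d n \ inner n,
        (∫ ω, g ω ∂((Qper n).map (shift S i)) - I)|
        ≤ ((cube d n \ inner n).card : ℝ) * (2 * C) := by
      calc |∑ i ∈ cube d n \ inner n, (∫ ω, g ω ∂((Qper n).map (shift S i)) - I)|
          ≤ ∑ i ∈ cube d n \ inner n, |∫ ω, g ω ∂((Qper n).map (shift S i)) - I| :=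
            Finset.abs_sum_le_sum_abs _ _
        _ ≤ ∑ _i ∈ cube d n \ inner n, (2 * C) :=
            Finset.sum_le_sum fun i _ => hterm i
        _ = ((cube d n \ inner n).card : ℝ) * (2 * C) := by
            rw [Finset.sum_const, nsmul_eq_mul]
    have hcard_sdiff : (cube d n \ inner n).card
        = (2 * n) ^ d - (2 * (n - M) + 1) ^ d := by
      rw [Finset.card_sdiff_of_subset (hsub n hnM), hcard_cube, hcard_inner n hnM]
    calc |F n - I| = (((2 * n : ℕ) : ℝ) ^ d)⁻¹ *
        |∑ i ∈ cube d n \ inner n, (∫ ω, g ω ∂((Qper n).map (shift S i)) - I)| := by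
          rw [hdiff, hsplit, abs_mul, abs_of_nonneg (by positivity)]
      _ ≤ (((2 * n : ℕ) : ℝ) ^ d)⁻¹ * (((cube d n \ inner n).card : ℝ) * (2 * C)) := by
          apply mul_le_mul_of_nonneg_left hsumbound (by positivity)
      _ = 2 * C * ((((2 * n) ^ d - (2 * (n - M) + 1) ^ d : ℕ) : ℝ) /
          (((2 * n) ^ d : ℕ) : ℝ)) := by
          rw [hcard_sdiff]
          push_cast
          field_simp
  -- the bound tends to 0
  have hratio : Tendsto (fun n : ℕ => (((2 * n) ^ d - (2 * (n - M) + 1) ^ d : ℕ) : ℝ) /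
      (((2 * n) ^ d : ℕ) : ℝ)) atTop (nhds 0) := by
    have hq : Tendsto (fun n : ℕ => ((2 * (n - M) + 1 : ℕ) : ℝ) / ((2 * n : ℕ) : ℝ))
        atTop (nhds 1) := by
      have h1 : Tendsto (fun n : ℕ => 1 - ((2 * M - 1 : ℝ) / 2) / (n : ℝ)) atTop (nhds 1) := by
        have := (tendsto_const_div_atTop_nhds_zero_nat ((2 * M - 1 : ℝ) / 2)).const_sub 1
        simpa using this
      apply h1.congr'
      filter_upwards [eventually_ge_atTop M, eventually_ge_atTop 1] with n hnM hn1
      have hn0 : ((n:ℝ)) ≠ 0 := by positivity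
      have hcast : ((2 * (n - M) + 1 : ℕ) : ℝ) = 2 * (n : ℝ) - (2 * M - 1) := by
        push_cast [Nat.cast_sub hnM]
        ring
      rw [hcast]
      push_cast
      field_simp
    have hqd : Tendsto (fun n : ℕ => (((2 * (n - M) + 1 : ℕ) : ℝ) / ((2 * n : ℕ) : ℝ)) ^ d)
        atTop (nhds 1) := by
      have := hq.pow d
      simpa using this
    have hfinal := (tendsto_const_nhds (x := (1:ℝ)) (f := atTop)).sub hqd
    rw [sub_self] at hfinal
    apply hfinal.congr'
    filter_upwards [eventually_ge_atTop M, eventually_ge_atTop 1] with n hnM hn1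
    have hle : (2 * (n - M) + 1) ^ d ≤ (2 * n) ^ d := by
      apply Nat.pow_le_pow_left
      omega
    have hpos : (0:ℝ) < ((2 * n : ℕ) : ℝ) ^ d := by
      have : (0:ℝ) < ((2 * n : ℕ) : ℝ) := by
        have : 0 < 2 * n := by omega
        exact_mod_cast this
      positivity
    have hb : (2 * (n:ℝ)) ≠ 0 := by
      have : (0:ℝ) < (n:ℝ) := by exact_mod_cast hn1
      positivity
    rw [Nat.cast_sub hle]
    push_cast
    rw [div_pow, sub_div, div_self (pow_ne_zero d hb)]
  have hB : Tendsto (fun n : ℕ => 2 * C * ((((2 * n) ^ d - (2 * (n - M) + 1) ^ d : ℕ) : ℝ) /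
      (((2 * n) ^ d : ℕ) : ℝ))) atTop (nhds 0) := by
    have := hratio.const_mul (2 * C)
    simpa using this
  -- conclude by squeezing
  rw [show Tendsto (fun n : ℕ =>
      ∫ ω, g ω ∂(((2 * n : ℝ≥0∞) ^ d)⁻¹ • ∑ i ∈ cube d n, (Qper n).map (shift S i)))
      atTop (nhds (∫ ω, g ω ∂μ)) = Tendsto F atTop (nhds I) from rfl]
  rw [tendsto_iff_dist_tendsto_zero]
  apply squeeze_zero' (f := fun n => dist (F n) I)
    (t₀ := atTop) (g := fun n => 2 * C * ((((2 * n) ^ d - (2 * (n - M) + 1) ^ d : ℕ) : ℝ) /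
      (((2 * n) ^ d : ℕ) : ℝ)))
  · exact Eventually.of_forall fun n => dist_nonneg
  · filter_upwards [eventually_ge_atTop (max M 1)] with n hn
    rw [Real.dist_eq]
    exact hest n hn
  · exact hB
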